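/- (Stembridge) Let λ, μ be dominant weights of a simple Lie algebra with μ ≺ λ in dominance order. Then there is a chain of dominant weights μ = λ_k ≺ λ_{k−1} ≺ ⋯ ≺ λ_0 = λ in which each step is a cover relation, and every cover relation λ_{i+1} ≺ λ_i satisfies that λ_i − λ_{i+1} is a positive root. -/

import Mathlib

/-!
STATEMENT 16 (Stembridge): For a simple Lie algebra (encoded by an indecomposable
Cartan matrix of finite type `A`), and dominant weights `μ ≺ λ` in the dominance
order, there is a chain of dominant weights from `λ` down to `μ` in which each step
is a cover relation, and each cover step differs by a positive root.

We work in fundamental-weight coordinates: weights are `Fin n → ℤ`, the simple root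
`α_j` is the `j`-th column of `A`, dominance is coordinatewise nonnegativity, roots
are the Weyl group orbit of the simple roots, and `μ ⪯ λ` iff `λ − μ` is a
nonnegative integral combination of simple roots.
-/

section
variable {n : ℕ} (A : Matrix (Fin n) (Fin n) ℤ)

/-- The simple root `α_j` in fundamental-weight coordinates. -/
def colA (j : Fin n) : Fin n → ℤ := fun i => A i j

/-- The simple reflection `s_i` on the weight lattice. -/
def srefl (i : Fin n) : Function.End (Fin n → ℤ) := fun c => c - c i • colA A i

/-- `v` is a root iff it lies in the Weyl group orbit of a simple root. -/
def IsRoot (v : Fin n → ℤ) : Prop :=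
  ∃ f ∈ Submonoid.closure (Set.range (srefl A)), ∃ k, v = f (colA A k)

/-- `v` is a positive root. -/
def IsPosRoot (v : Fin n → ℤ) : Prop :=
  IsRoot A v ∧ ∃ m : Fin n → ℕ, v = ∑ j, (m j : ℤ) • colA A j

/-- A weight is dominant iff its fundamental-weight coordinates are nonnegative. -/
def IsDom (v : Fin n → ℤ) : Prop := ∀ i, 0 ≤ v i

/-- The dominance order. -/
def DomLE (μ lam : Fin n → ℤ) : Prop :=
  ∃ m : Fin n → ℕ, lam - μ = ∑ j, (m j : ℤ) • colA A j

/-- A cover relation in the restriction of the dominance order to dominant weights. -/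
def Covers (μ lam : Fin n → ℤ) : Prop :=
  IsDom μ ∧ IsDom lam ∧ DomLE A μ lam ∧ μ ≠ lam ∧
    ¬∃ ν : Fin n → ℤ, IsDom ν ∧ DomLE A μ ν ∧ DomLE A ν lam ∧ ν ≠ μ ∧ ν ≠ lam

end


section StembridgeAux
variable {n : ℕ} (A : Matrix (Fin n) (Fin n) ℤ) (d : Fin n → ℚ)

def pA (c : Fin n → ℤ) (i : Fin n) : ℤ := ∑ j, A i j * c j
def toV (c : Fin n → ℤ) : Fin n → ℤ := fun i => pA A c i
def sC (i : Fin n) : Function.End (Fin n → ℤ) := fun c => c - pA A c i • Pi.single i 1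
def WC : Submonoid (Function.End (Fin n → ℤ)) := Submonoid.closure (Set.range (sC A))
def RootC (c : Fin n → ℤ) : Prop := ∃ g ∈ WC A, ∃ k, c = g (Pi.single k 1)

lemma pA_add (x y : Fin n → ℤ) (i : Fin n) : pA A (x + y) i = pA A x i + pA A y i := by
  simp [pA, mul_add, Finset.sum_add_distrib]

lemma pA_sub (x y : Fin n → ℤ) (i : Fin n) : pA A (x - y) i = pA A x i - pA A y i := by
  simp [pA, mul_sub, Finset.sum_sub_distrib]

lemma pA_smul (z : ℤ) (x : Fin n → ℤ) (i : Fin n) : pA A (z • x) i = z * pA A x i := by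
  simp [pA, Finset.mul_sum]; ring_nf; exact Finset.sum_congr rfl (fun j _ => by ring)

lemma pA_single (k i : Fin n) : pA A (Pi.single k 1) i = A i k := by
  simp [pA, Pi.single_apply, mul_ite, Finset.sum_ite_eq']

lemma toV_single (k : Fin n) : toV A (Pi.single k 1) = colA A k := by
  funext i; simp [toV, pA_single, colA]

lemma toV_sC (i : Fin n) (c : Fin n → ℤ) : toV A (sC A i c) = srefl A i (toV A c) := by
  funext j
  simp only [toV, sC, srefl, Pi.sub_apply, Pi.smul_apply, smul_eq_mul]
  rw [pA_sub, pA_smul, pA_single]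
  simp [colA]


lemma wc_linear : ∀ g ∈ WC A, (∀ x y, g (x - y) = g x - g y) ∧ (∀ (z : ℤ) x, g (z • x) = z • g x) := by
  intro g hg
  induction hg using Submonoid.closure_induction with
  | mem f hf =>
    obtain ⟨i, rfl⟩ := hf
    constructor
    · intro x y
      show sC A i (x - y) = sC A i x - sC A i y
      simp only [sC, pA_sub, sub_smul]
      abel
    · intro z x
      show sC A i (z • x) = z • sC A i x
      simp only [sC, pA_smul, smul_sub, mul_smul]
  | one => exact ⟨fun _ _ => rfl, fun _ _ => rfl⟩
  | mul f g _ _ hf hg =>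
    refine ⟨fun x y => ?_, fun z x => ?_⟩
    · show f (g (x - y)) = f (g x) - f (g y)
      rw [hg.1, hf.1]
    · show f (g (z • x)) = z • f (g x)
      rw [hg.2, hf.2]

lemma sC_invol (hdiag : ∀ i, A i i = 2) (i : Fin n) (c : Fin n → ℤ) : sC A i (sC A i c) = c := by
  have h : pA A (sC A i c) i = - pA A c i := by
    simp only [sC, pA_sub, pA_smul]
    have : pA A (Pi.single i 1) i = A i i := by
      simp [pA, Pi.single_apply, mul_ite, Finset.sum_ite_eq']
    rw [this, hdiag]; ring
  show sC A i c - pA A (sC A i c) i • Pi.single i 1 = c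
  rw [h]
  simp only [sC, neg_smul, sub_neg_eq_add]
  abel

lemma wc_inv (hdiag : ∀ i, A i i = 2) : ∀ g ∈ WC A, ∃ h ∈ WC A, (∀ x, h (g x) = x) ∧ (∀ x, g (h x) = x) := by
  intro g hg
  induction hg using Submonoid.closure_induction with
  | mem f hf =>
    obtain ⟨i, rfl⟩ := hf
    exact ⟨sC A i, Submonoid.subset_closure ⟨i, rfl⟩, fun x => sC_invol A hdiag i x,
      fun x => sC_invol A hdiag i x⟩
  | one => exact ⟨1, one_mem _, fun _ => rfl, fun _ => rfl⟩
  | mul f g hf hg ihf ihg =>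
    obtain ⟨f', hf', hf1, hf2⟩ := ihf
    obtain ⟨g', hg', hg1, hg2⟩ := ihg
    refine ⟨g' * f', mul_mem hg' hf', fun x => ?_, fun x => ?_⟩
    · show g' (f' ((f * g) x)) = x
      show g' (f' (f (g x))) = x
      rw [hf1, hg1]
    · show f (g (g' (f' x))) = x
      rw [hg2, hf2]

lemma wc_up : ∀ g ∈ WC A, ∃ f ∈ Submonoid.closure (Set.range (srefl A)), ∀ c, toV A (g c) = f (toV A c) := by
  intro g hg
  induction hg using Submonoid.closure_induction with
  | mem f hf =>
    obtain ⟨i, rfl⟩ := hf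
    exact ⟨srefl A i, Submonoid.subset_closure ⟨i, rfl⟩, fun c => toV_sC A i c⟩
  | one => exact ⟨1, one_mem _, fun _ => rfl⟩
  | mul f g _ _ ihf ihg =>
    obtain ⟨f', hf', hf1⟩ := ihf
    obtain ⟨g', hg', hg1⟩ := ihg
    refine ⟨f' * g', mul_mem hf' hg', fun c => ?_⟩
    show toV A (f (g c)) = f' (g' (toV A c))
    rw [hf1, hg1]

lemma wc_down : ∀ f ∈ Submonoid.closure (Set.range (srefl A)), ∃ g ∈ WC A, ∀ c, f (toV A c) = toV A (g c) := by
  intro f hf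
  induction hf using Submonoid.closure_induction with
  | mem f hf =>
    obtain ⟨i, rfl⟩ := hf
    exact ⟨sC A i, Submonoid.subset_closure ⟨i, rfl⟩, fun c => (toV_sC A i c).symm⟩
  | one => exact ⟨1, one_mem _, fun _ => rfl⟩
  | mul f g _ _ ihf ihg =>
    obtain ⟨f', hf', hf1⟩ := ihf
    obtain ⟨g', hg', hg1⟩ := ihg
    refine ⟨f' * g', mul_mem hf' hg', fun c => ?_⟩
    show f (g (toV A c)) = toV A (f' (g' c))
    rw [hg1, hf1]

lemma isRoot_iff (v : Fin n → ℤ) : IsRoot A v ↔ ∃ c, RootC A c ∧ v = toV A c := by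
  constructor
  · rintro ⟨f, hf, k, rfl⟩
    obtain ⟨g, hg, hg1⟩ := wc_down A f hf
    exact ⟨g (Pi.single k 1), ⟨g, hg, k, rfl⟩, by rw [← toV_single, hg1]⟩
  · rintro ⟨c, ⟨g, hg, k, rfl⟩, rfl⟩
    obtain ⟨f, hf, hf1⟩ := wc_up A g hg
    exact ⟨f, hf, k, by rw [hf1, toV_single]⟩


/-- rational pairing -/
def pAq (x : Fin n → ℚ) (i : Fin n) : ℚ := ∑ j, (A i j : ℚ) * x j

/-- the invariant bilinear form -/
def Bq (x y : Fin n → ℚ) : ℚ := ∑ i, d i * x i * pAq A y i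

def czv (x : Fin n → ℤ) : Fin n → ℚ := fun i => (x i : ℚ)

variable (hdiag : ∀ i, A i i = 2)
  (hd : ∀ i, 0 < d i) (hsym : ∀ i j, d i * (A i j : ℚ) = d j * A j i)
  (hpos : ∀ x : Fin n → ℚ, x ≠ 0 → 0 < ∑ i, ∑ j, d i * (A i j : ℚ) * x i * x j)

lemma Bq_expand (x y : Fin n → ℚ) : Bq A d x y = ∑ i, ∑ j, d i * (A i j : ℚ) * x i * y j := by
  unfold Bq pAq
  refine Finset.sum_congr rfl (fun i _ => ?_)
  rw [Finset.mul_sum]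
  exact Finset.sum_congr rfl (fun j _ => by ring)

include hsym in
lemma Bq_symm (x y : Fin n → ℚ) : Bq A d x y = Bq A d y x := by
  rw [Bq_expand, Bq_expand, Finset.sum_comm]
  refine Finset.sum_congr rfl (fun j _ => Finset.sum_congr rfl (fun i _ => ?_))
  rw [show d i * (A i j : ℚ) * x i * y j = (d i * A i j) * x i * y j by ring, hsym]
  ring

include hpos in
lemma Bq_pos (x : Fin n → ℚ) (hx : x ≠ 0) : 0 < Bq A d x x := by
  rw [Bq_expand]; exact hpos x hx

include hpos in
lemma Bq_nonneg (x : Fin n → ℚ) : 0 ≤ Bq A d x x := by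
  by_cases hx : x = 0
  · subst hx; simp [Bq, pAq]
  · exact le_of_lt (Bq_pos A d hpos x hx)

lemma Bq_sub_left (x y z : Fin n → ℚ) : Bq A d (x - y) z = Bq A d x z - Bq A d y z := by
  unfold Bq
  rw [← Finset.sum_sub_distrib]
  exact Finset.sum_congr rfl (fun i _ => by simp only [Pi.sub_apply]; ring)

lemma Bq_smul_left (t : ℚ) (x z : Fin n → ℚ) : Bq A d (t • x) z = t * Bq A d x z := by
  unfold Bq
  rw [Finset.mul_sum]
  exact Finset.sum_congr rfl (fun i _ => by simp; ring)

include hsym in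
lemma Bq_sub_right (x y z : Fin n → ℚ) : Bq A d z (x - y) = Bq A d z x - Bq A d z y := by
  rw [Bq_symm A d hsym, Bq_sub_left, Bq_symm A d hsym x z, Bq_symm A d hsym y z]

include hsym in
lemma Bq_smul_right (t : ℚ) (x z : Fin n → ℚ) : Bq A d z (t • x) = t * Bq A d z x := by
  rw [Bq_symm A d hsym, Bq_smul_left, Bq_symm A d hsym x z]

include hsym hpos in
/-- strict Cauchy-Schwarz for independent vectors -/
lemma Bq_cs (x y : Fin n → ℚ) (hy : Bq A d y y ≠ 0)
    (hind : ∀ r : ℚ, x ≠ r • y) :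
    Bq A d x y ^ 2 < Bq A d x x * Bq A d y y := by
  set t : ℚ := Bq A d x y / Bq A d y y with ht
  have hz : x - t • y ≠ 0 := by
    intro h
    exact hind t (by rwa [sub_eq_zero] at h)
  have h0 : 0 < Bq A d (x - t • y) (x - t • y) := Bq_pos A d hpos _ hz
  have hexp : Bq A d (x - t • y) (x - t • y)
      = Bq A d x x - t * Bq A d y x - t * Bq A d x y + t * t * Bq A d y y := by
    simp only [Bq_sub_left, Bq_sub_right A d hsym, Bq_smul_left, Bq_smul_right A d hsym]
    ring
  have hyx : Bq A d y x = Bq A d x y := Bq_symm A d hsym y x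
  have htB : t * Bq A d y y = Bq A d x y := div_mul_cancel₀ _ hy
  have hyy : 0 < Bq A d y y := lt_of_le_of_ne (Bq_nonneg A d hpos y) (Ne.symm hy)
  rw [hexp, hyx] at h0
  nlinarith [h0, htB, hyy]

lemma czv_sub (x y : Fin n → ℤ) : czv (x - y) = czv x - czv y := by
  funext i; simp [czv]

lemma czv_smul (z : ℤ) (x : Fin n → ℤ) : czv (z • x) = (z : ℚ) • czv x := by
  funext i; simp [czv]

lemma czv_single (i : Fin n) : czv (Pi.single i 1 : Fin n → ℤ) = Pi.single i 1 := by
  funext j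
  simp [czv, Pi.single_apply]

lemma pAq_czv (x : Fin n → ℤ) (i : Fin n) : pAq A (czv x) i = ((pA A x i : ℤ) : ℚ) := by
  unfold pAq pA czv
  push_cast
  rfl

include hsym in
lemma Bq_single_right (x : Fin n → ℚ) (i : Fin n) :
    Bq A d x (Pi.single i 1) = d i * pAq A x i := by
  rw [Bq_symm A d hsym]
  unfold Bq
  have : ∀ k, d k * (Pi.single i 1 : Fin n → ℚ) k * pAq A x k
      = if k = i then d i * pAq A x i else 0 := by
    intro k
    by_cases h : k = i
    · subst h; simp
    · simp [Pi.single_apply, h]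
  rw [Finset.sum_congr rfl (fun k _ => this k), Finset.sum_ite_eq' Finset.univ i]
  simp

include hdiag hsym in
lemma Bq_single_single (i : Fin n) :
    Bq A d (Pi.single i 1) (Pi.single i 1) = 2 * d i := by
  rw [Bq_single_right A d hsym]
  unfold pAq
  rw [show (∑ j, (A i j : ℚ) * (Pi.single i 1 : Fin n → ℚ) j) = A i i by
    rw [Finset.sum_eq_single i] <;> simp +contextual [Pi.single_apply]]
  rw [hdiag]; ring

include hdiag hsym in
lemma Bq_sC_invariant (i : Fin n) (x y : Fin n → ℤ) :
    Bq A d (czv (sC A i x)) (czv (sC A i y)) = Bq A d (czv x) (czv y) := by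
  have hx : czv (sC A i x) = czv x - (pA A x i : ℚ) • (Pi.single i 1 : Fin n → ℚ) := by
    unfold sC
    rw [czv_sub, czv_smul, czv_single]
  have hy : czv (sC A i y) = czv y - (pA A y i : ℚ) • (Pi.single i 1 : Fin n → ℚ) := by
    unfold sC
    rw [czv_sub, czv_smul, czv_single]
  rw [hx, hy]
  simp only [Bq_sub_left, Bq_sub_right A d hsym, Bq_smul_left, Bq_smul_right A d hsym]
  rw [Bq_single_right A d hsym, Bq_single_single A d hdiag hsym,
    Bq_symm A d hsym (Pi.single i 1) (czv y), Bq_single_right A d hsym,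
    pAq_czv, pAq_czv]
  push_cast
  ring

include hdiag hsym in
lemma Bq_wc_invariant : ∀ g ∈ WC A, ∀ x y : Fin n → ℤ,
    Bq A d (czv (g x)) (czv (g y)) = Bq A d (czv x) (czv y) := by
  intro g hg
  induction hg using Submonoid.closure_induction with
  | mem f hf =>
    obtain ⟨i, rfl⟩ := hf
    exact fun x y => Bq_sC_invariant A d hdiag hsym i x y
  | one => exact fun x y => rfl
  | mul f g _ _ ihf ihg =>
    intro x y
    show Bq A d (czv (f (g x))) (czv (f (g y))) = _
    rw [ihf, ihg]


lemma RootC_single (k : Fin n) : RootC A (Pi.single k 1) := ⟨1, one_mem _, k, rfl⟩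

lemma RootC_sC (i : Fin n) {c : Fin n → ℤ} (hc : RootC A c) : RootC A (sC A i c) := by
  obtain ⟨g, hg, k, rfl⟩ := hc
  exact ⟨sC A i * g, mul_mem (Submonoid.subset_closure ⟨i, rfl⟩) hg, k, rfl⟩

lemma czv_eq_zero {c : Fin n → ℤ} (h : czv c = 0) : c = 0 := by
  funext j
  have := congrFun h j
  simpa [czv] using this

include hdiag hsym in
lemma root_norm {c : Fin n → ℤ} (hc : RootC A c) :
    ∃ k, Bq A d (czv c) (czv c) = 2 * d k := by
  obtain ⟨g, hg, k, rfl⟩ := hc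
  exact ⟨k, by rw [Bq_wc_invariant A d hdiag hsym g hg, czv_single,
    Bq_single_single A d hdiag hsym]⟩

include hdiag hd hsym in
lemma root_ne_zero {c : Fin n → ℤ} (hc : RootC A c) : c ≠ 0 := by
  obtain ⟨k, hk⟩ := root_norm A d hdiag hsym hc
  intro h
  subst h
  have h0 : Bq A d (czv (0 : Fin n → ℤ)) (czv (0 : Fin n → ℤ)) = 0 := by
    simp [Bq, czv]
  rw [h0] at hk
  have := hd k
  linarith

include hdiag hsym in
lemma sRoot {β : Fin n → ℤ} (hβ : RootC A β) (x : Fin n → ℤ) :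
    ∃ t : ℤ, (t : ℚ) * Bq A d (czv β) (czv β) = 2 * Bq A d (czv x) (czv β) ∧
      (RootC A x → RootC A (x - t • β)) := by
  obtain ⟨g, hg, k, hβeq⟩ := hβ
  obtain ⟨h, hh, h1, h2⟩ := wc_inv A hdiag g hg
  refine ⟨pA A (h x) k, ?_, ?_⟩
  · have e1 : Bq A d (czv x) (czv β) = Bq A d (czv (h x)) (czv (Pi.single k 1)) := by
      conv_lhs => rw [show x = g (h x) from (h2 x).symm, hβeq]
      exact Bq_wc_invariant A d hdiag hsym g hg (h x) (Pi.single k 1)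
    have e2 : Bq A d (czv β) (czv β) = 2 * d k := by
      rw [hβeq, Bq_wc_invariant A d hdiag hsym g hg, czv_single,
        Bq_single_single A d hdiag hsym]
    have e3 : Bq A d (czv (h x)) (czv (Pi.single k 1)) = d k * ((pA A (h x) k : ℤ) : ℚ) := by
      rw [czv_single, Bq_single_right A d hsym, pAq_czv]
    rw [e1, e2, e3]
    ring
  · intro hx
    obtain ⟨g', hg', k', hxeq⟩ := hx
    have hlin := wc_linear A g hg
    have hkey : x - pA A (h x) k • β = g (sC A k (h x)) := by
      show _ = g (h x - pA A (h x) k • Pi.single k 1)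
      rw [hlin.1, hlin.2, h2, ← hβeq]
    refine ⟨g * sC A k * h * g', ?_, k', ?_⟩
    · exact mul_mem (mul_mem (mul_mem hg (Submonoid.subset_closure ⟨k, rfl⟩)) hh) hg'
    · show x - _ • β = g (sC A k (h (g' (Pi.single k' 1))))
      rw [← hxeq, hkey]

include hdiag hd hsym hpos in
lemma root_add_single {β : Fin n → ℤ} (hβ : RootC A β) (hb0 : ∀ j, 0 ≤ β j) {i : Fin n}
    (hneg : pA A β i < 0) : RootC A (β + Pi.single i 1) := by
  have hczv : czv β ≠ 0 := fun h => root_ne_zero A d hdiag hd hsym hβ (czv_eq_zero h)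
  have hBb_pos : 0 < Bq A d (czv β) (czv β) := Bq_pos A d hpos _ hczv
  have hBe : Bq A d (czv (Pi.single i 1 : Fin n → ℤ)) (czv (Pi.single i 1 : Fin n → ℤ))
      = 2 * d i := by rw [czv_single]; exact Bq_single_single A d hdiag hsym i
  have hBbe : Bq A d (czv β) (czv (Pi.single i 1 : Fin n → ℤ)) = d i * ((pA A β i : ℤ) : ℚ) := by
    rw [czv_single, Bq_single_right A d hsym, pAq_czv]
  have hBbe_neg : Bq A d (czv β) (czv (Pi.single i 1 : Fin n → ℤ)) < 0 := by
    rw [hBbe]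
    have := hd i
    have : ((pA A β i : ℤ) : ℚ) < 0 := by exact_mod_cast hneg
    nlinarith [hd i]
  obtain ⟨t, ht, hroot⟩ := sRoot A d hdiag hsym hβ (Pi.single i 1)
  have hBeb : Bq A d (czv (Pi.single i 1 : Fin n → ℤ)) (czv β)
      = Bq A d (czv β) (czv (Pi.single i 1 : Fin n → ℤ)) := Bq_symm A d hsym _ _
  have htneg : t < 0 := by
    by_contra hcon
    push_neg at hcon
    have h1 : (0 : ℚ) ≤ (t : ℚ) := by exact_mod_cast hcon
    rw [hBeb] at ht
    nlinarith
  have hind : ∀ r : ℚ, czv β ≠ r • (czv (Pi.single i 1 : Fin n → ℤ)) := by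
    intro r h
    have hr1 : (czv β) i = r := by
      rw [h, czv_single]
      simp
    have hr0 : 0 ≤ r := by
      simp only [czv] at hr1
      rw [← hr1]
      exact_mod_cast hb0 i
    rw [h, Bq_smul_left, hBe] at hBbe_neg
    nlinarith [hd i]
  have hBe_ne : Bq A d (czv (Pi.single i 1 : Fin n → ℤ)) (czv (Pi.single i 1 : Fin n → ℤ)) ≠ 0 := by
    rw [hBe]; have := hd i; positivity
  have hcs := Bq_cs A d hsym hpos (czv β) (czv (Pi.single i 1 : Fin n → ℤ)) hBe_ne hind
  set p : ℤ := -pA A β i with hp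
  set q : ℤ := -t with hq
  have hp1 : 1 ≤ p := by omega
  have hq1 : 1 ≤ q := by omega
  have hprod : p * q ≤ 3 := by
    have e1 : (p : ℚ) * (2 * d i) = -2 * Bq A d (czv β) (czv (Pi.single i 1 : Fin n → ℤ)) := by
      have hpz : (p : ℚ) = -((pA A β i : ℤ) : ℚ) := by rw [hp]; push_cast; ring
      rw [hBbe, hpz]
      ring
    have e2 : (q : ℚ) * Bq A d (czv β) (czv β)
        = -2 * Bq A d (czv β) (czv (Pi.single i 1 : Fin n → ℤ)) := by
      rw [← hBeb]
      push_cast [hq]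
      linarith [ht]
    have hX : (0 : ℚ) < Bq A d (czv β) (czv β) * (2 * d i) := by
      have := hd i
      nlinarith
    have h4 : ((p * q : ℤ) : ℚ) * (Bq A d (czv β) (czv β) * (2 * d i))
        < 4 * (Bq A d (czv β) (czv β) * (2 * d i)) := by
      push_cast
      nlinarith [hcs, e1, e2]
    have : ((p * q : ℤ) : ℚ) < 4 := by
      by_contra hcon
      push_neg at hcon
      nlinarith
    have : p * q < 4 := by exact_mod_cast this
    omega
  have hcase : p = 1 ∨ q = 1 := by
    by_contra hcon
    push_neg at hcon
    have : 2 ≤ p := by omega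
    have : 2 ≤ q := by omega
    nlinarith
  rcases hcase with hc1 | hc2
  · have hβi : pA A β i = -1 := by omega
    have : sC A i β = β + Pi.single i 1 := by
      show β - pA A β i • Pi.single i 1 = β + Pi.single i 1
      rw [hβi]
      simp
    rw [← this]
    exact RootC_sC A i hβ
  · have ht1 : t = -1 := by omega
    have := hroot (RootC_single A i)
    rw [ht1] at this
    have heq : Pi.single i 1 - (-1 : ℤ) • β = β + Pi.single i 1 := by
      simp
      abel
    rwa [heq] at this

include hdiag hd hsym hpos in
lemma key (hoff : ∀ i j, i ≠ j → A i j ≤ 0) (μ m : Fin n → ℤ)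
    (hm0 : ∀ j, 0 ≤ m j) (hmne : m ≠ 0) (hdm : ∀ i, 0 ≤ μ i)
    (hdl : ∀ i, 0 ≤ μ i + pA A m i) :
    ∃ β : Fin n → ℤ, RootC A β ∧ (∀ j, 0 ≤ β j) ∧ (∀ j, β j ≤ m j) ∧
      (∀ i, 0 ≤ μ i + pA A β i) := by
  set S : Set (Fin n → ℤ) := {β | RootC A β ∧ ∀ j, 0 ≤ β j ∧ β j ≤ m j} with hS
  have hfin : S.Finite := by
    apply Set.Finite.subset (Set.Finite.pi (fun j : Fin n => Set.finite_Icc (0 : ℤ) (m j)))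
    intro x hx
    exact fun j _ => ⟨(hx.2 j).1, (hx.2 j).2⟩
  have hne : S.Nonempty := by
    obtain ⟨k, hk⟩ : ∃ k, m k ≠ 0 := by
      by_contra hcon
      push_neg at hcon
      exact hmne (funext hcon)
    refine ⟨Pi.single k 1, RootC_single A k, fun j => ?_⟩
    by_cases h : j = k
    · subst h
      simp only [Pi.single_eq_same]
      constructor
      · norm_num
      · have := hm0 j; omega
    · simp only [Pi.single_eq_of_ne h]
      exact ⟨le_refl 0, hm0 j⟩
  obtain ⟨β, hβS, hmax⟩ := Set.Finite.exists_maximalFor (fun β => ∑ j, β j) S hfin hne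
  refine ⟨β, hβS.1, fun j => (hβS.2 j).1, fun j => (hβS.2 j).2, ?_⟩
  by_contra hcon
  push_neg at hcon
  obtain ⟨i, hi⟩ := hcon
  have hneg : pA A β i < 0 := by
    have := hdm i
    omega
  have hroot' := root_add_single A d hdiag hd hsym hpos hβS.1 (fun j => (hβS.2 j).1) hneg
  have hδi : β i + 1 ≤ m i := by
    have h1 : 1 ≤ pA A (m - β) i := by
      rw [pA_sub]
      have := hdl i
      omega
    have h2 : pA A (m - β) i ≤ 2 * (m i - β i) := by
      unfold pA
      rw [← Finset.sum_erase_add _ _ (Finset.mem_univ i)]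
      have ha : ∑ j ∈ Finset.univ.erase i, A i j * (m - β) j ≤ 0 := by
        apply Finset.sum_nonpos
        intro j hj
        have hji : j ≠ i := Finset.ne_of_mem_erase hj
        have h3 : A i j ≤ 0 := hoff i j (Ne.symm hji)
        have h4 : 0 ≤ (m - β) j := by
          simp only [Pi.sub_apply]
          have := hβS.2 j
          omega
        exact mul_nonpos_of_nonpos_of_nonneg h3 h4
      have hb : A i i * (m - β) i = 2 * (m i - β i) := by
        rw [hdiag]
        simp
      omega
    omega
  have hmem : (β + Pi.single i 1) ∈ S := by
    refine ⟨hroot', fun j => ?_⟩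
    by_cases h : j = i
    · subst h
      simp only [Pi.add_apply, Pi.single_eq_same]
      have := (hβS.2 j).1
      omega
    · simp only [Pi.add_apply, Pi.single_eq_of_ne h]
      have := hβS.2 j
      omega
  have hle : (∑ j, β j) ≤ ∑ j, (β + Pi.single i 1 : Fin n → ℤ) j := by
    apply Finset.sum_le_sum
    intro j _
    by_cases h : j = i
    · subst h; simp
    · simp [Pi.single_eq_of_ne h]
  have heq : (∑ j, (β + Pi.single i 1 : Fin n → ℤ) j) ≤ ∑ j, β j := hmax hmem hle
  have : ∑ j, (β + Pi.single i 1 : Fin n → ℤ) j = (∑ j, β j) + 1 := by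
    simp only [Pi.add_apply]
    rw [Finset.sum_add_distrib]
    congr 1
    simp [Pi.single_apply, Finset.sum_ite_eq']
  omega

lemma sumcol (a : Fin n → ℤ) : (∑ j, a j • colA A j) = toV A a := by
  funext i
  rw [Finset.sum_apply]
  simp only [Pi.smul_apply, smul_eq_mul, toV, pA, colA]
  exact Finset.sum_congr rfl (fun j _ => mul_comm _ _)

lemma sumcol_nat (m : Fin n → ℕ) :
    (∑ j, (m j : ℤ) • colA A j) = toV A (fun j => (m j : ℤ)) :=
  sumcol A (fun j => (m j : ℤ))

lemma toV_sub (x y : Fin n → ℤ) : toV A (x - y) = toV A x - toV A y := by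
  funext i
  simp only [toV, Pi.sub_apply, pA_sub]

lemma toV_add (x y : Fin n → ℤ) : toV A (x + y) = toV A x + toV A y := by
  funext i
  simp only [toV, Pi.add_apply, pA_add]

include hd hsym hpos in
lemma toV_eq_zero {c : Fin n → ℤ} (h : toV A c = 0) : c = 0 := by
  by_contra hc
  have hcz : czv c ≠ 0 := fun hh => hc (czv_eq_zero hh)
  have hBpos := Bq_pos A d hpos (czv c) hcz
  have hz : Bq A d (czv c) (czv c) = 0 := by
    unfold Bq
    apply Finset.sum_eq_zero
    intro i _
    rw [pAq_czv]
    have hpz : pA A c i = 0 := congrFun h i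
    rw [hpz]
    simp
  linarith

lemma domle_toV {μ ν : Fin n → ℤ} (c : Fin n → ℤ) (hc0 : ∀ j, 0 ≤ c j)
    (h : ν - μ = toV A c) : DomLE A μ ν := by
  refine ⟨fun j => (c j).toNat, ?_⟩
  rw [sumcol_nat]
  have he : (fun j => (((c j).toNat : ℤ))) = c := funext fun j => Int.toNat_of_nonneg (hc0 j)
  rw [he]
  exact h

include hdiag hd hsym hpos in
lemma cover_posroot (hoff : ∀ i j, i ≠ j → A i j ≤ 0) {μ lam : Fin n → ℤ}
    (hcov : Covers A μ lam) : IsPosRoot A (lam - μ) := by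
  obtain ⟨hdm, hdl2, ⟨m, hm⟩, hne, hnex⟩ := hcov
  set mz : Fin n → ℤ := fun j => (m j : ℤ) with hmzdef
  have hm' : lam - μ = toV A mz := by rw [hm, sumcol_nat]
  have hmne : mz ≠ 0 := by
    intro h
    apply hne
    have h2 : lam - μ = 0 := by
      rw [hm', h]
      funext i
      simp [toV, pA]
    exact (sub_eq_zero.mp h2).symm
  have hm0 : ∀ j, 0 ≤ mz j := fun j => Int.natCast_nonneg _
  have hdl' : ∀ i, 0 ≤ μ i + pA A mz i := by
    intro i
    have h2 : pA A mz i = lam i - μ i := by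
      have h3 := congrFun hm' i
      simp only [Pi.sub_apply] at h3
      have : toV A mz i = pA A mz i := rfl
      omega
    rw [h2]
    have := hdl2 i
    omega
  obtain ⟨β, hβroot, hβ0, hβm, hβdom⟩ :=
    key A d hdiag hd hsym hpos hoff μ mz hm0 hmne hdm hdl'
  set ν : Fin n → ℤ := μ + toV A β with hνdef
  have hν1 : ν - μ = toV A β := by rw [hνdef]; abel
  have hd1 : DomLE A μ ν := domle_toV A β hβ0 hν1
  have hd2 : DomLE A ν lam := by
    refine domle_toV A (mz - β) ?_ ?_
    · intro j
      simp only [Pi.sub_apply]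
      have := hβm j
      omega
    · rw [toV_sub, ← hm', hνdef]
      abel
  have hνdom : IsDom ν := by
    intro i
    have := hβdom i
    simpa [hνdef, toV] using this
  have hνμ : ν ≠ μ := by
    intro h
    have h2 : toV A β = 0 := by rw [← hν1, h]; simp
    exact root_ne_zero A d hdiag hd hsym hβroot (toV_eq_zero A d hd hsym hpos h2)
  have hνlam : ν = lam := by
    by_contra hcon
    exact hnex ⟨ν, hνdom, hd1, hd2, hνμ, hcon⟩
  have hfinal : lam - μ = toV A β := by rw [← hνlam, hν1]
  constructor
  · rw [hfinal]
    exact (isRoot_iff A _).mpr ⟨β, hβroot, rfl⟩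
  · refine ⟨fun j => (β j).toNat, ?_⟩
    rw [sumcol_nat]
    have he : (fun j => (((β j).toNat : ℤ))) = β := funext fun j => Int.toNat_of_nonneg (hβ0 j)
    rw [he]
    exact hfinal

include hdiag hd hsym hpos in
lemma chain (hoff : ∀ i j, i ≠ j → A i j ≤ 0) : ∀ h : ℕ, ∀ lam μ : Fin n → ℤ,
    IsDom lam → IsDom μ →
    ∀ m : Fin n → ℕ, lam - μ = (∑ j, (m j : ℤ) • colA A j) → (∑ j, m j) = h → μ ≠ lam →
    ∃ (k : ℕ) (c : ℕ → (Fin n → ℤ)), 0 < k ∧ c 0 = lam ∧ c k = μ ∧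
      (∀ i < k, IsDom (c i)) ∧ IsDom (c k) ∧
      ∀ i < k, Covers A (c (i + 1)) (c i) ∧ IsPosRoot A (c i - c (i + 1)) := by
  intro h
  induction h using Nat.strong_induction_on with
  | _ h IH =>
  intro lam μ hdl hdm m hm hsum hne
  by_cases hcov : Covers A μ lam
  · refine ⟨1, fun t => if t = 0 then lam else μ, one_pos, rfl, rfl, ?_, ?_, ?_⟩
    · intro i hi
      interval_cases i
      simpa using hdl
    · simpa using hdm
    · intro i hi
      interval_cases i
      simp only [if_pos rfl, if_neg (one_ne_zero)]
      exact ⟨hcov, cover_posroot A d hdiag hd hsym hpos hoff hcov⟩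
  · have hex : ∃ ν, IsDom ν ∧ DomLE A μ ν ∧ DomLE A ν lam ∧ ν ≠ μ ∧ ν ≠ lam := by
      by_contra h'
      exact hcov ⟨hdm, hdl, ⟨m, hm⟩, hne, h'⟩
    obtain ⟨ν, hνdom, ⟨m1, hm1⟩, ⟨m2, hm2⟩, hνμ, hνlam⟩ := hex
    have hsplit : ∀ j, m1 j + m2 j = m j := by
      have e1 : toV A ((fun j => (m1 j : ℤ)) + (fun j => (m2 j : ℤ))) = toV A (fun j => (m j : ℤ)) := by
        rw [toV_add, ← sumcol_nat, ← sumcol_nat, ← sumcol_nat, ← hm1, ← hm2, ← hm]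
        abel
      have e2 : toV A (((fun j => (m1 j : ℤ)) + (fun j => (m2 j : ℤ))) - (fun j => (m j : ℤ))) = 0 := by
        rw [toV_sub, e1]
        simp
      have e3 := toV_eq_zero A d hd hsym hpos e2
      intro j
      have e4 := congrFun e3 j
      simp only [Pi.sub_apply, Pi.add_apply, Pi.zero_apply] at e4
      omega
    have hsums : (∑ j, m1 j) + (∑ j, m2 j) = h := by
      rw [← hsum, ← Finset.sum_add_distrib]
      exact Finset.sum_congr rfl (fun j _ => hsplit j)
    have hs1 : 1 ≤ ∑ j, m1 j := by
      by_contra hcon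
      push_neg at hcon
      have h0 : ∀ j, m1 j = 0 := by
        intro j
        have : (∑ j, m1 j) = 0 := by omega
        exact Finset.sum_eq_zero_iff.mp this j (Finset.mem_univ j)
      apply hνμ
      have : ν - μ = 0 := by
        rw [hm1]
        apply Finset.sum_eq_zero
        intro j _
        rw [h0 j]
        simp
      exact sub_eq_zero.mp this
    have hs2 : 1 ≤ ∑ j, m2 j := by
      by_contra hcon
      push_neg at hcon
      have h0 : ∀ j, m2 j = 0 := by
        intro j
        have : (∑ j, m2 j) = 0 := by omega
        exact Finset.sum_eq_zero_iff.mp this j (Finset.mem_univ j)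
      apply hνlam
      have : lam - ν = 0 := by
        rw [hm2]
        apply Finset.sum_eq_zero
        intro j _
        rw [h0 j]
        simp
      exact (sub_eq_zero.mp this).symm
    obtain ⟨k2, c2, hk2, hc20, hc2k, hc2dom, hc2domk, hc2cov⟩ :=
      IH (∑ j, m2 j) (by omega) lam ν hdl hνdom m2 hm2 rfl hνlam
    obtain ⟨k1, c1, hk1, hc10, hc1k, hc1dom, hc1domk, hc1cov⟩ :=
      IH (∑ j, m1 j) (by omega) ν μ hνdom hdm m1 hm1 rfl (Ne.symm hνμ)
    set c : ℕ → (Fin n → ℤ) := fun t => if t < k2 then c2 t else c1 (t - k2) with hcdef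
    have hceq1 : ∀ t, t < k2 → c t = c2 t := fun t ht => if_pos ht
    have hceq2 : ∀ t, k2 ≤ t → c t = c1 (t - k2) := fun t ht => if_neg (by omega)
    have hagree : ∀ t, t ≤ k2 → c t = c2 t := by
      intro t ht
      rcases lt_or_eq_of_le ht with h' | h'
      · exact hceq1 t h'
      · subst h'
        rw [hceq2 t le_rfl, Nat.sub_self, hc10, hc2k]
    refine ⟨k2 + k1, c, by omega, ?_, ?_, ?_, ?_, ?_⟩
    · rw [hceq1 0 hk2, hc20]
    · rw [hceq2 _ (by omega), Nat.add_sub_cancel_left, hc1k]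
    · intro i hi
      by_cases h' : i < k2
      · rw [hceq1 i h']
        exact hc2dom i h'
      · rw [hceq2 i (by omega)]
        exact hc1dom (i - k2) (by omega)
    · rw [hceq2 _ (by omega), Nat.add_sub_cancel_left, hc1k]
      exact hdm
    · intro i hi
      by_cases h' : i + 1 ≤ k2
      · rw [hagree i (by omega), hagree (i + 1) h']
        exact hc2cov i (by omega)
      · by_cases h'' : i < k2
        · omega
        · rw [hceq2 i (by omega), hceq2 (i + 1) (by omega),
            show i + 1 - k2 = (i - k2) + 1 by omega]
          exact hc1cov (i - k2) (by omega)


end StembridgeAux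

theorem stmt16 (n : ℕ) (A : Matrix (Fin n) (Fin n) ℤ)
    -- `A` is a generalized Cartan matrix …
    (hdiag : ∀ i, A i i = 2)
    (hoff : ∀ i j, i ≠ j → A i j ≤ 0)
    (hzero : ∀ i j, A i j = 0 ↔ A j i = 0)
    -- … of finite type (symmetrizable with positive definite symmetrization) …
    (hfin : ∃ d : Fin n → ℚ, (∀ i, 0 < d i) ∧ (∀ i j, d i * (A i j : ℚ) = d j * A j i) ∧
      ∀ x : Fin n → ℚ, x ≠ 0 → 0 < ∑ i, ∑ j, d i * (A i j : ℚ) * x i * x j)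
    -- … and indecomposable (so that it corresponds to a *simple* Lie algebra).
    (hconn : ∀ s : Set (Fin n), s.Nonempty → s ≠ Set.univ → ∃ i ∈ s, ∃ j, j ∉ s ∧ A i j ≠ 0)
    (lam μ : Fin n → ℤ) (hdl : IsDom lam) (hdm : IsDom μ)
    (hle : DomLE A μ lam) (hne : μ ≠ lam) :
    ∃ (k : ℕ) (c : ℕ → (Fin n → ℤ)), 0 < k ∧ c 0 = lam ∧ c k = μ ∧
      (∀ i < k, IsDom (c i)) ∧ IsDom (c k) ∧
      ∀ i < k, Covers A (c (i + 1)) (c i) ∧ IsPosRoot A (c i - c (i + 1)) := by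
  obtain ⟨d, hd, hsym, hpos⟩ := hfin
  obtain ⟨m, hm⟩ := hle
  exact chain A d hdiag hd hsym hpos hoff (∑ j, m j) lam μ hdl hdm m hm rfl hne
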